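/- Let γ ∈ (0,1) and let 0 < a ≤ b be real numbers. Then ∫_a^b r⁻¹·(ln(1+1/r))^(γ−1) dr ≤ ((1+b)/γ)·(ln(1+(b−a)/a))^γ. -/

import Mathlib

open Real Set MeasureTheory

lemma real_rpow_add_le_add_rpow {x y p : ℝ} (hx : 0 ≤ x) (hy : 0 ≤ y)
    (hp : 0 ≤ p) (hp1 : p ≤ 1) : (x + y) ^ p ≤ x ^ p + y ^ p := by
  lift x to NNReal using hx
  lift y to NNReal using hy
  have h := NNReal.rpow_add_le_add_rpow x y hp hp1
  exact_mod_cast h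

theorem integral_cone_estimate (γ a b : ℝ) (hγ : γ ∈ Set.Ioo (0:ℝ) 1)
    (ha : 0 < a) (hab : a ≤ b) :
    ∫ r in Set.Icc a b, r⁻¹ * (Real.log (1 + 1/r)) ^ (γ - 1)
      ≤ ((1 + b) / γ) * (Real.log (1 + (b - a)/a)) ^ γ := by
  obtain ⟨hγ0, hγ1⟩ := hγ
  have hb : 0 < b := lt_of_lt_of_le ha hab
  set A := Real.log (1 + 1/a) with hA
  set B := Real.log (1 + 1/b) with hB
  have hApos : 0 < A := Real.log_pos (by nlinarith [one_div_pos.mpr ha])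
  have hBpos : 0 < B := Real.log_pos (by nlinarith [one_div_pos.mpr hb])
  have hBA : B ≤ A := by
    apply Real.log_le_log (by positivity)
    have : 1/b ≤ 1/a := one_div_le_one_div_of_le ha hab
    linarith
  -- pointwise facts on [a,b]
  have hrpos : ∀ r ∈ Set.Icc a b, 0 < r := fun r hr => lt_of_lt_of_le ha hr.1
  have hlogpos : ∀ r ∈ Set.Icc a b, 0 < Real.log (1 + 1/r) := by
    intro r hr
    exact Real.log_pos (by nlinarith [one_div_pos.mpr (hrpos r hr)])
  -- define g
  set g : ℝ → ℝ := fun r => (r * (1 + r))⁻¹ * (Real.log (1 + 1/r)) ^ (γ - 1) with hg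
  -- antiderivative
  set F : ℝ → ℝ := fun r => -(γ⁻¹ * (Real.log (1 + 1/r)) ^ γ) with hF
  have hderiv : ∀ r ∈ Set.Icc a b, HasDerivAt F (g r) r := by
    intro r hr
    have hr0 : 0 < r := hrpos r hr
    have hL : 0 < Real.log (1 + 1/r) := hlogpos r hr
    have h1 : HasDerivAt (fun x : ℝ => 1 + 1/x) (-(r ^ 2)⁻¹) r := by
      simpa using (hasDerivAt_inv hr0.ne').const_add 1
    have h1r : (0:ℝ) < 1 + 1/r := by positivity
    have h2 : HasDerivAt (fun x : ℝ => Real.log (1 + 1/x))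
        (-(r ^ 2)⁻¹ / (1 + 1/r)) r := h1.log h1r.ne'
    have h3 : HasDerivAt (fun x : ℝ => (Real.log (1 + 1/x)) ^ γ)
        (-(r ^ 2)⁻¹ / (1 + 1/r) * γ * (Real.log (1 + 1/r)) ^ (γ - 1)) r :=
      h2.rpow_const (Or.inl hL.ne')
    have h4 := ((h3.const_mul γ⁻¹).neg)
    have h4 : HasDerivAt F _ r := h4
    convert h4 using 1
    have hγne : γ ≠ 0 := hγ0.ne'
    simp only [hg]
    field_simp
    ring
  -- integrability of g and of the integrand via continuity
  have hcontg : ContinuousOn g (Set.Icc a b) := by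
    apply ContinuousOn.mul
    · apply ContinuousOn.inv₀
      · exact (continuousOn_id.mul (continuousOn_const.add continuousOn_id))
      · intro r hr; have := hrpos r hr; positivity
    · apply ContinuousOn.rpow_const
      · apply ContinuousOn.log
        · exact continuousOn_const.add (continuousOn_const.div continuousOn_id
            (fun r hr => (hrpos r hr).ne'))
        · intro r hr; have h1r : (0:ℝ) < 1 + 1/r := by
            have := hrpos r hr; positivity
          exact h1r.ne'
      · intro r hr; exact Or.inl (hlogpos r hr).ne'
  have hcontf : ContinuousOn (fun r : ℝ => r⁻¹ * (Real.log (1 + 1/r)) ^ (γ - 1))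
      (Set.Icc a b) := by
    apply ContinuousOn.mul
    · exact ContinuousOn.inv₀ continuousOn_id (fun r hr => (hrpos r hr).ne')
    · apply ContinuousOn.rpow_const
      · apply ContinuousOn.log
        · exact continuousOn_const.add (continuousOn_const.div continuousOn_id
            (fun r hr => (hrpos r hr).ne'))
        · intro r hr; have h1r : (0:ℝ) < 1 + 1/r := by
            have := hrpos r hr; positivity
          exact h1r.ne'
      · intro r hr; exact Or.inl (hlogpos r hr).ne'
  have hintg : IntervalIntegrable g volume a b :=
    (hcontg.mono (by rw [Set.uIcc_of_le hab])).intervalIntegrable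
  have hintf : IntervalIntegrable (fun r : ℝ => r⁻¹ * (Real.log (1 + 1/r)) ^ (γ - 1))
      volume a b :=
    (hcontf.mono (by rw [Set.uIcc_of_le hab])).intervalIntegrable
  -- value of ∫ g
  have hFTC : ∫ r in a..b, g r = F b - F a := by
    apply intervalIntegral.integral_eq_sub_of_hasDerivAt
    · intro r hr
      rw [Set.uIcc_of_le hab] at hr
      exact hderiv r hr
    · exact hintg
  -- convert set integral to interval integral
  rw [MeasureTheory.integral_Icc_eq_integral_Ioc, ← intervalIntegral.integral_of_le hab]
  -- pointwise bound f ≤ (1+b) * g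
  have hpw : ∀ r ∈ Set.Icc a b,
      r⁻¹ * (Real.log (1 + 1/r)) ^ (γ - 1) ≤ (1 + b) * g r := by
    intro r hr
    have hr0 : 0 < r := hrpos r hr
    have hL : 0 ≤ (Real.log (1 + 1/r)) ^ (γ - 1) := Real.rpow_nonneg (hlogpos r hr).le _
    have heq : r⁻¹ * (Real.log (1 + 1/r)) ^ (γ - 1) = (1 + r) * g r := by
      rw [hg]; field_simp
    rw [heq]
    have hgnn : 0 ≤ g r := by
      rw [hg]; positivity
    have : (1 + r) ≤ 1 + b := by linarith [hr.2]
    nlinarith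
  have h1 : ∫ r in a..b, r⁻¹ * (Real.log (1 + 1/r)) ^ (γ - 1)
      ≤ ∫ r in a..b, (1 + b) * g r := by
    apply intervalIntegral.integral_mono_on hab hintf (hintg.const_mul _) hpw
  have h2 : ∫ r in a..b, (1 + b) * g r = (1 + b) * (F b - F a) := by
    rw [intervalIntegral.integral_const_mul, hFTC]
  -- final estimate
  have hAB : A - B ≤ Real.log (1 + (b - a)/a) := by
    have hba : 1 + (b - a)/a = b/a := by field_simp; ring
    rw [hba, hA, hB, ← Real.log_div (by positivity) (by positivity)]
    apply Real.log_le_log (by positivity)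
    rw [div_le_div_iff₀ (by positivity) (by positivity)]
    have h1a : (1 + 1/a) = (a + 1)/a := by field_simp
    have h1b : (1 + 1/b) = (b + 1)/b := by field_simp
    rw [h1a, h1b]
    rw [div_mul_eq_mul_div, div_le_iff₀ (by positivity)]
    field_simp
    nlinarith
  have hLpos : 0 ≤ Real.log (1 + (b - a)/a) := le_trans (by linarith) hAB
  have hkey : A ^ γ - B ^ γ ≤ (Real.log (1 + (b - a)/a)) ^ γ := by
    have hsub : A ^ γ ≤ (A - B) ^ γ + B ^ γ := by
      have := real_rpow_add_le_add_rpow (x := A - B) (y := B)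
        (by linarith) hBpos.le hγ0.le hγ1.le
      simpa using this
    have hmono : (A - B) ^ γ ≤ (Real.log (1 + (b - a)/a)) ^ γ :=
      Real.rpow_le_rpow (by linarith) hAB hγ0.le
    linarith
  calc ∫ r in a..b, r⁻¹ * (Real.log (1 + 1/r)) ^ (γ - 1)
      ≤ (1 + b) * (F b - F a) := by rw [← h2]; exact h1
    _ ≤ ((1 + b) / γ) * (Real.log (1 + (b - a)/a)) ^ γ := by
        have hFab : F b - F a = γ⁻¹ * (A ^ γ - B ^ γ) := by
          rw [hF]; ring_nf; rw [hA, hB]; ring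
        rw [hFab]
        have heq : ((1 + b) / γ) * (Real.log (1 + (b - a)/a)) ^ γ
            = (1 + b) * (γ⁻¹ * (Real.log (1 + (b - a)/a)) ^ γ) := by
          field_simp
        rw [heq]
        have h1b : (0:ℝ) ≤ 1 + b := by linarith
        exact mul_le_mul_of_nonneg_left
          (mul_le_mul_of_nonneg_left hkey (by positivity)) h1b
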